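/- Let f : (a,b) → ℝ be continuous on an open interval and suppose every point x* ∈ (a,b) with 0 ∈ ∂f(x*) (Clarke subdifferential) is a global minimizer of f. Then every sublevel set {x ∈ (a,b) : f(x) ≤ α} is an interval (convex); i.e., a locally Lipschitz invex function of one real variable is quasiconvex. -/

import Mathlib

open Filter Topology
open MeasureTheory intervalIntegral
set_option maxHeartbeats 1000000

/-- The Clarke subdifferential of `f : ℝ → ℝ` relative to a set `s`, defined as the
convex hull of limits of derivatives at nearby points of differentiability in `s`. -/
noncomputable def clarkeSubdiffOn (f : ℝ → ℝ) (s : Set ℝ) (x : ℝ) : Set ℝ :=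
  convexHull ℝ {ξ | ∃ u : ℕ → ℝ,
    (∀ k, u k ∈ s ∧ DifferentiableAt ℝ f (u k)) ∧
    Tendsto u atTop (𝓝 x) ∧
    Tendsto (fun k => deriv f (u k)) atTop (𝓝 ξ)}

/-- step B helper: slope along the sequence `p + 1/(k+1)` tends to the derivative. -/
lemma tendsto_slope_seq {f : ℝ → ℝ} {p d : ℝ} (hd : HasDerivAt f d p) :
    Tendsto (fun k : ℕ => (f (p + 1 / (k + 1)) - f p) / (1 / (k + 1))) atTop (𝓝 d) := by
  have hslope := hasDerivAt_iff_tendsto_slope.mp hd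
  have hpos : ∀ k : ℕ, (0:ℝ) < 1 / (k + 1) := fun k => by positivity
  have hten : Tendsto (fun k : ℕ => p + 1 / (k + 1)) atTop (𝓝[≠] p) := by
    rw [tendsto_nhdsWithin_iff]
    constructor
    · have := tendsto_one_div_add_atTop_nhds_zero_nat (𝕜 := ℝ)
      have h2 : Tendsto (fun k : ℕ => p + 1 / (k + 1)) atTop (𝓝 (p + 0)) :=
        tendsto_const_nhds.add this
      simpa using h2
    · exact Eventually.of_forall fun k => by
        simp only [Set.mem_compl_iff, Set.mem_singleton_iff]
        have := hpos k; intro h; nlinarith [this]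
  have := hslope.comp hten
  convert this using 2 with k
  simp [slope_def_field]


/-- derivative of a Lipschitz function is bounded by the Lipschitz constant. -/
lemma abs_deriv_le_of_lipschitz {f : ℝ → ℝ} {K : NNReal} (hf : LipschitzWith K f) (x : ℝ) :
    |deriv f x| ≤ K := by
  by_cases hx : DifferentiableAt ℝ f x
  · have h1 : ‖fderiv ℝ f x‖ ≤ (K : ℝ) := by
      apply norm_fderiv_le_of_lip' ℝ K.coe_nonneg
      refine Eventually.of_forall fun y => ?_
      have := hf.dist_le_mul y x
      simpa [Real.dist_eq] using this
    have h2 := (fderiv ℝ f x).le_opNorm 1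
    rw [fderiv_apply_one_eq_deriv] at h2
    simp at h2
    calc |deriv f x| ≤ ‖fderiv ℝ f x‖ := by simpa [Real.norm_eq_abs] using h2
    _ ≤ K := h1
  · simp [deriv_zero_of_not_differentiableAt hx]

/-- average of a continuous function over `[p, p + 1/(k+1)]` tends to `f p`. -/
lemma tendsto_avg_integral {f : ℝ → ℝ} (hf : Continuous f) (p : ℝ) :
    Tendsto (fun k : ℕ => (∫ x in p..(p + 1 / (k + 1)), f x) / (1 / (k + 1))) atTop (𝓝 (f p)) := by
  have hG : HasDerivAt (fun u => ∫ x in p..u, f x) (f p) p :=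
    integral_hasDerivAt_right (hf.intervalIntegrable _ _)
      (hf.stronglyMeasurableAtFilter _ _) hf.continuousAt
  have := tendsto_slope_seq hG
  simpa using this

/-- FTC-type bound for Lipschitz functions: if `deriv f ≤ c` a.e. on `(t, m)`, then
`f m - f t ≤ c * (m - t)`. -/
lemma lipschitz_sub_le_of_deriv_ae_le {f : ℝ → ℝ} {K : NNReal} (hf : LipschitzWith K f)
    {t m c : ℝ} (htm : t < m)
    (hc : ∀ᵐ x, x ∈ Set.Ioo t m → deriv f x ≤ c) :
    f m - f t ≤ c * (m - t) := by
  set h : ℕ → ℝ := fun k => 1 / (k + 1) with hh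
  have hpos : ∀ k, (0:ℝ) < h k := fun k => by positivity
  have hcf : Continuous f := hf.continuous
  set g : ℕ → ℝ → ℝ := fun k x => (f (x + h k) - f x) / h k with hg
  have hgc : ∀ k, Continuous (g k) :=
    fun k => ((hcf.comp (continuous_id.add continuous_const)).sub hcf).div_const _
  -- Step 1: the integral of g k over (t, m]
  have hstep1 : ∀ k, (∫ x in Set.Ioc t m, g k x) =
      (∫ x in m..(m + h k), f x) / h k - (∫ x in t..(t + h k), f x) / h k := by
    intro k
    have hI : (∫ x in Set.Ioc t m, g k x) = ∫ x in t..m, g k x :=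
      (integral_of_le htm.le).symm
    rw [hI]
    have hint : ∀ u v : ℝ, IntervalIntegrable f volume u v := fun u v =>
      hcf.intervalIntegrable u v
    have hc1 : Continuous fun x => f (x + h k) := by fun_prop
    have e1 : (∫ x in t..m, g k x)
        = ((∫ x in t..m, f (x + h k)) - ∫ x in t..m, f x) / h k := by
      rw [← integral_sub (hc1.intervalIntegrable _ _) (hint t m), ← intervalIntegral.integral_div]
    have e2 : (∫ x in t..m, f (x + h k)) = ∫ x in (t + h k)..(m + h k), f x :=
      integral_comp_add_right f (h k)
    have e3 : (∫ x in (t + h k)..(m + h k), f x) =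
        (∫ x in (t + h k)..m, f x) + ∫ x in m..(m + h k), f x :=
      (integral_add_adjacent_intervals (hint _ _) (hint _ _)).symm
    have e4 : (∫ x in t..m, f x) =
        (∫ x in t..(t + h k), f x) + ∫ x in (t + h k)..m, f x :=
      (integral_add_adjacent_intervals (hint _ _) (hint _ _)).symm
    rw [e1, e2, e3, e4]
    ring
  -- Step 2: convergence to f m - f t
  have hstep2 : Tendsto (fun k => ∫ x in Set.Ioc t m, g k x) atTop (𝓝 (f m - f t)) := by
    have h1 := tendsto_avg_integral hcf m
    have h2 := tendsto_avg_integral hcf t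
    have := h1.sub h2
    apply this.congr
    intro k
    exact (hstep1 k).symm
  -- Step 3: dominated convergence to the integral of the derivative
  have hstep3 : Tendsto (fun k => ∫ x in Set.Ioc t m, g k x) atTop
      (𝓝 (∫ x in Set.Ioc t m, deriv f x)) := by
    apply tendsto_integral_of_dominated_convergence (fun _ => (K : ℝ))
    · exact fun k => ((hgc k).aestronglyMeasurable).restrict
    · exact (integrableOn_const measure_Ioc_lt_top.ne)
    · intro k
      refine Eventually.of_forall fun x => ?_
      have hd := hf.dist_le_mul (x + h k) x
      rw [Real.dist_eq, Real.dist_eq] at hd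
      simp only [add_sub_cancel_left] at hd
      rw [Real.norm_eq_abs, hg, abs_div, abs_of_pos (hpos k)]
      rw [div_le_iff₀ (hpos k)]
      calc |f (x + h k) - f x| ≤ K * |h k| := hd
      _ = K * h k := by rw [abs_of_pos (hpos k)]
    · have hae := hf.ae_differentiableAt_real
      have hae' : ∀ᵐ x : ℝ, Tendsto (fun k => g k x) atTop (𝓝 (deriv f x)) := by
        filter_upwards [hae] with x hx
        exact tendsto_slope_seq hx.hasDerivAt
      exact ae_restrict_of_ae hae'
  -- Step 4: bound on the integral of the derivative
  have hbd : ∀ x, |deriv f x| ≤ (K : ℝ) := abs_deriv_le_of_lipschitz hf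
  have hderiv_int : IntegrableOn (fun x => deriv f x) (Set.Ioc t m) := by
    have hconst : IntegrableOn (fun _ : ℝ => (K:ℝ)) (Set.Ioc t m) :=
      integrableOn_const measure_Ioc_lt_top.ne
    have hmeas : AEStronglyMeasurable (fun x => deriv f x)
        (volume.restrict (Set.Ioc t m)) := (measurable_deriv f).aestronglyMeasurable.restrict
    exact hconst.mono' hmeas
      (Eventually.of_forall fun x => by simpa [Real.norm_eq_abs] using hbd x)
  have hae_le : ∀ᵐ x ∂(volume.restrict (Set.Ioc t m)), deriv f x ≤ c := by
    have hm : ∀ᵐ x : ℝ, x ≠ m := by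
      rw [ae_iff]
      have : {x : ℝ | ¬x ≠ m} = {m} := by ext x; simp
      rw [this]
      exact Real.volume_singleton
    have : ∀ᵐ x : ℝ, x ∈ Set.Ioc t m → deriv f x ≤ c := by
      filter_upwards [hc, hm] with x hx hxm hmem
      exact hx ⟨hmem.1, lt_of_le_of_ne hmem.2 hxm⟩
    exact (ae_restrict_iff' measurableSet_Ioc).mpr this
  have hstep4 : (∫ x in Set.Ioc t m, deriv f x) ≤ c * (m - t) := by
    have h1 : (∫ x in Set.Ioc t m, deriv f x) ≤ ∫ _ in Set.Ioc t m, c :=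
      integral_mono_ae hderiv_int (integrableOn_const measure_Ioc_lt_top.ne) hae_le
    have h2 : (∫ _ in Set.Ioc t m, c) = (m - t) * c := by
      rw [setIntegral_const, Real.volume_real_Ioc_of_le htm.le, smul_eq_mul]
    rw [h2, mul_comm] at h1
    exact h1
  have := tendsto_nhds_unique hstep2 hstep3
  rw [this]
  exact hstep4

/-- Approximate mean value: if `f t ≤ f m`, there are differentiability points in `(t, m)`
with derivative `> -ε`. -/
lemma exists_deriv_gt {f : ℝ → ℝ} {K : NNReal} (hf : LipschitzWith K f) {t m : ℝ}
    (htm : t < m) (hfm : f t ≤ f m) {ε : ℝ} (hε : 0 < ε) :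
    ∃ u ∈ Set.Ioo t m, DifferentiableAt ℝ f u ∧ -ε < deriv f u := by
  by_contra hcon
  push_neg at hcon
  have hae : ∀ᵐ x : ℝ, x ∈ Set.Ioo t m → deriv f x ≤ -ε := by
    filter_upwards [hf.ae_differentiableAt_real] with x hx hmem
    exact hcon x hmem hx
  have := lipschitz_sub_le_of_deriv_ae_le hf htm hae
  nlinarith

/-- Approximate mean value, other side: if `f y ≤ f m`, there are differentiability points
in `(m, y)` with derivative `< ε`. -/
lemma exists_deriv_lt {f : ℝ → ℝ} {K : NNReal} (hf : LipschitzWith K f) {m y : ℝ}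
    (hmy : m < y) (hfm : f y ≤ f m) {ε : ℝ} (hε : 0 < ε) :
    ∃ u ∈ Set.Ioo m y, DifferentiableAt ℝ f u ∧ deriv f u < ε := by
  set g : ℝ → ℝ := fun x => f (-x) with hgdef
  have hg : LipschitzWith K g := by
    have : LipschitzWith 1 (fun x : ℝ => -x) := LipschitzWith.id.neg
    have := hf.comp this; rwa [mul_one] at this
  have h1 : g (-y) ≤ g (-m) := by simpa [hgdef] using hfm
  obtain ⟨u', hu', hdu', hder'⟩ := exists_deriv_gt hg (by linarith : -y < -m) h1 hε
  refine ⟨-u', ⟨by linarith [hu'.2], by linarith [hu'.1]⟩, ?_, ?_⟩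
  · have h2 : DifferentiableAt ℝ g (-(-u')) := by rw [neg_neg]; exact hdu'
    have h3 : DifferentiableAt ℝ (fun x : ℝ => -x) (-u') := differentiableAt_id.neg
    have : DifferentiableAt ℝ (fun x => g (-x)) (-u') := by
      simpa [Function.comp_def] using h2.comp (-u') h3
    have hfg : (fun x => g (-x)) = f := by funext x; simp [hgdef]
    rwa [hfg] at this
  · have hcomp : deriv (fun x => g (-x)) (-u') = -deriv g (- -u') := deriv_comp_neg g (-u')
    have hfg : (fun x => g (-x)) = f := by funext x; simp [hgdef]
    rw [hfg] at hcomp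
    rw [hcomp, neg_neg]
    linarith

/-- Extract a convergent subsequence of derivatives. -/
lemma exists_subseq_limit {f : ℝ → ℝ} {m K : ℝ} (u : ℕ → ℝ)
    (hdist : ∀ n : ℕ, dist (u n) m ≤ 1 / (n + 1))
    (hbd : ∀ n, |deriv f (u n)| ≤ K) :
    ∃ ξ : ℝ, ∃ φ : ℕ → ℕ, StrictMono φ ∧ Tendsto (fun k => u (φ k)) atTop (𝓝 m) ∧
      Tendsto (fun k => deriv f (u (φ k))) atTop (𝓝 ξ) := by
  have hmem : ∀ n, deriv f (u n) ∈ Set.Icc (-K) K := fun n => abs_le.mp (hbd n)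
  obtain ⟨ξ, _, φ, hφ, hten⟩ := (isCompact_Icc (a := -K) (b := K)).tendsto_subseq hmem
  have hum : Tendsto u atTop (𝓝 m) := by
    rw [tendsto_iff_dist_tendsto_zero]
    exact squeeze_zero (fun n => dist_nonneg) hdist tendsto_one_div_add_atTop_nhds_zero_nat
  exact ⟨ξ, φ, hφ, hum.comp hφ.tendsto_atTop, hten⟩

/-- From a sequence of differentiability points approaching `m` with derivatives eventually
nonnegative in the limit, produce a nonnegative element of the Clarke seed set. -/
lemma seed_nonneg (f : ℝ → ℝ) (s : Set ℝ) (m : ℝ) (K : ℝ) (u : ℕ → ℝ)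
    (hmem : ∀ n, u n ∈ s ∧ DifferentiableAt ℝ f (u n))
    (hdist : ∀ n : ℕ, dist (u n) m ≤ 1 / (n + 1))
    (hbd : ∀ n, |deriv f (u n)| ≤ K)
    (hlow : ∀ n : ℕ, -(1 / ((n : ℝ) + 1)) ≤ deriv f (u n)) :
    ∃ ξ, 0 ≤ ξ ∧ ξ ∈ {ξ | ∃ u : ℕ → ℝ,
      (∀ k, u k ∈ s ∧ DifferentiableAt ℝ f (u k)) ∧
      Tendsto u atTop (𝓝 m) ∧
      Tendsto (fun k => deriv f (u k)) atTop (𝓝 ξ)} := by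
  obtain ⟨ξ, φ, hφ, hue, hde⟩ := exists_subseq_limit u hdist hbd
  have hlow' : ∀ k : ℕ, -(1 / ((k : ℝ) + 1)) ≤ deriv f (u (φ k)) := by
    intro k
    refine le_trans ?_ (hlow (φ k))
    have h1 : (1 : ℝ) / (φ k + 1) ≤ 1 / (k + 1) := by
      apply one_div_le_one_div_of_le (by positivity)
      have h2 : (k : ℝ) ≤ (φ k : ℝ) := Nat.cast_le.mpr (hφ.le_apply (x := k))
      linarith
    linarith
  have h0 : Tendsto (fun k : ℕ => -(1 / ((k : ℝ) + 1))) atTop (𝓝 0) := by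
    simpa using (tendsto_one_div_add_atTop_nhds_zero_nat (𝕜 := ℝ)).neg
  refine ⟨ξ, le_of_tendsto_of_tendsto' h0 hde hlow', ?_⟩
  exact ⟨fun k => u (φ k), fun k => hmem (φ k), hue, hde⟩

/-- Mirror image: derivatives eventually nonpositive in the limit. -/
lemma seed_nonpos (f : ℝ → ℝ) (s : Set ℝ) (m : ℝ) (K : ℝ) (u : ℕ → ℝ)
    (hmem : ∀ n, u n ∈ s ∧ DifferentiableAt ℝ f (u n))
    (hdist : ∀ n : ℕ, dist (u n) m ≤ 1 / (n + 1))
    (hbd : ∀ n, |deriv f (u n)| ≤ K)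
    (hhigh : ∀ n : ℕ, deriv f (u n) ≤ 1 / ((n : ℝ) + 1)) :
    ∃ ξ, ξ ≤ 0 ∧ ξ ∈ {ξ | ∃ u : ℕ → ℝ,
      (∀ k, u k ∈ s ∧ DifferentiableAt ℝ f (u k)) ∧
      Tendsto u atTop (𝓝 m) ∧
      Tendsto (fun k => deriv f (u k)) atTop (𝓝 ξ)} := by
  obtain ⟨ξ, φ, hφ, hue, hde⟩ := exists_subseq_limit u hdist hbd
  have hhigh' : ∀ k : ℕ, deriv f (u (φ k)) ≤ 1 / ((k : ℝ) + 1) := by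
    intro k
    refine le_trans (hhigh (φ k)) ?_
    apply one_div_le_one_div_of_le (by positivity)
    have h2 : (k : ℝ) ≤ (φ k : ℝ) := Nat.cast_le.mpr (hφ.le_apply (x := k))
    linarith
  have h0 : Tendsto (fun k : ℕ => 1 / ((k : ℝ) + 1)) atTop (𝓝 0) := by
    simpa using tendsto_one_div_add_atTop_nhds_zero_nat (𝕜 := ℝ)
  refine ⟨ξ, le_of_tendsto_of_tendsto' hde h0 hhigh', ?_⟩
  exact ⟨fun k => u (φ k), fun k => hmem (φ k), hue, hde⟩

/-- A locally Lipschitz invex function of one real variable (every Clarke stationary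
point is a global minimizer) is quasiconvex: all sublevel sets are convex. -/
theorem invex_one_dim_quasiconvex (a b : ℝ) (f : ℝ → ℝ)
    (hcont : ContinuousOn f (Set.Ioo a b))
    (hlip : ∀ x ∈ Set.Ioo a b, ∃ K : NNReal, ∃ ε > 0,
      LipschitzOnWith K f (Metric.ball x ε ∩ Set.Ioo a b))
    (hinvex : ∀ x ∈ Set.Ioo a b, 0 ∈ clarkeSubdiffOn f (Set.Ioo a b) x →
      ∀ y ∈ Set.Ioo a b, f x ≤ f y) :
    ∀ α : ℝ, Convex ℝ {x | x ∈ Set.Ioo a b ∧ f x ≤ α} := by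
  intro α
  rw [convex_iff_ordConnected]
  constructor
  rintro x1 ⟨hx1ab, hfx1⟩ x2 ⟨hx2ab, hfx2⟩ z hz
  refine ⟨⟨lt_of_lt_of_le hx1ab.1 hz.1, lt_of_le_of_lt hz.2 hx2ab.2⟩, ?_⟩
  by_contra hfz
  push_neg at hfz
  -- x1 < x2 (else z = x1 and f z ≤ α)
  have hx1x2 : x1 ≤ x2 := hz.1.trans hz.2
  rcases eq_or_lt_of_le hx1x2 with heq | hlt
  · have hzx1 : z = x1 := le_antisymm (heq ▸ hz.2) hz.1
    rw [hzx1] at hfz; linarith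
  -- maximum of f on [x1, x2]
  have hsub : Set.Icc x1 x2 ⊆ Set.Ioo a b := Set.Icc_subset_Ioo hx1ab.1 hx2ab.2
  obtain ⟨m, hmIcc, hmax⟩ := isCompact_Icc.exists_isMaxOn (Set.nonempty_Icc.mpr hx1x2)
    (hcont.mono hsub)
  have hmax' : ∀ w ∈ Set.Icc x1 x2, f w ≤ f m := isMaxOn_iff.mp hmax
  have hfm : α < f m := lt_of_lt_of_le hfz (hmax' z hz)
  have hm12 : m ∈ Set.Ioo x1 x2 := by
    rcases hmIcc.1.lt_or_eq with h1 | h1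
    · rcases hmIcc.2.lt_or_eq with h2 | h2
      · exact ⟨h1, h2⟩
      · exfalso; rw [h2] at hfm; linarith
    · exfalso; rw [← h1] at hfm; linarith
  have hmab : m ∈ Set.Ioo a b := hsub hmIcc
  -- local Lipschitz data at m
  obtain ⟨K, ε, hεpos, hK⟩ := hlip m hmab
  set δ : ℝ := min ε (min (m - x1) (x2 - m)) with hδdef
  have hδpos : 0 < δ := by
    apply lt_min hεpos
    apply lt_min <;> [linarith [hm12.1]; linarith [hm12.2]]
  have hball1 : Metric.ball m δ ⊆ Set.Ioo x1 x2 := by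
    intro w hw
    rw [Metric.mem_ball, Real.dist_eq, abs_lt] at hw
    have h1 : δ ≤ m - x1 := le_trans (min_le_right _ _) (min_le_left _ _)
    have h2 : δ ≤ x2 - m := le_trans (min_le_right _ _) (min_le_right _ _)
    constructor <;> [linarith [hw.1]; linarith [hw.2]]
  have hball2 : Metric.ball m δ ⊆ Metric.ball m ε := Metric.ball_subset_ball (min_le_left _ _)
  have hIooIoo : Set.Ioo x1 x2 ⊆ Set.Ioo a b := fun w hw =>
    ⟨lt_trans hx1ab.1 hw.1, lt_trans hw.2 hx2ab.2⟩
  have hKδ : LipschitzOnWith K f (Metric.ball m δ) :=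
    hK.mono (Set.subset_inter hball2 ((hball1.trans hIooIoo)))
  obtain ⟨g, hgLip, hfg⟩ := hKδ.extend_real
  -- m is a max of g on the ball
  have hgle : ∀ w ∈ Metric.ball m δ, g w ≤ g m := by
    intro w hw
    rw [← hfg hw, ← hfg (Metric.mem_ball_self hδpos)]
    exact hmax' w (Set.Ioo_subset_Icc_self (hball1 hw))
  -- common sequence facts
  set δn : ℕ → ℝ := fun n => min (δ / 2) (1 / (n + 1)) with hδndef
  have hδnpos : ∀ n, 0 < δn n := fun n => lt_min (by linarith) (by positivity)
  have hδnlt : ∀ n, δn n < δ := fun n => lt_of_le_of_lt (min_le_left _ _) (by linarith)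
  have hδnle : ∀ n : ℕ, δn n ≤ 1 / (n + 1) := fun n => min_le_right _ _
  -- process a sequence of points within δn of m into Clarke-seed data
  have process : ∀ u : ℕ → ℝ, (∀ n, |u n - m| < δn n) →
      (∀ n, DifferentiableAt ℝ g (u n)) →
      (∀ n, u n ∈ Set.Ioo a b ∧ DifferentiableAt ℝ f (u n)) ∧
      (∀ n : ℕ, dist (u n) m ≤ 1 / (n + 1)) ∧
      (∀ n, |deriv f (u n)| ≤ (K : ℝ)) ∧
      (∀ n, deriv f (u n) = deriv g (u n)) := by
    intro u hdist hdiff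
    have hmem : ∀ n, u n ∈ Metric.ball m δ := fun n => by
      rw [Metric.mem_ball, Real.dist_eq]
      exact lt_trans (hdist n) (hδnlt n)
    have heq : ∀ n, f =ᶠ[𝓝 (u n)] g := fun n =>
      hfg.eventuallyEq_of_mem (Metric.isOpen_ball.mem_nhds (hmem n))
    have hdf : ∀ n, DifferentiableAt ℝ f (u n) := fun n =>
      (hdiff n).congr_of_eventuallyEq (heq n)
    have hde : ∀ n, deriv f (u n) = deriv g (u n) := fun n => (heq n).deriv_eq
    refine ⟨fun n => ⟨hIooIoo (hball1 (hmem n)), hdf n⟩, fun n => ?_, fun n => ?_, hde⟩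
    · rw [Real.dist_eq]
      exact le_trans (hdist n).le (hδnle n)
    · rw [hde n]
      exact abs_deriv_le_of_lipschitz hgLip (u n)
  -- left sequence : derivative bounded below
  have hleft : ∀ n : ℕ, ∃ u, u ∈ Set.Ioo (m - δn n) m ∧ DifferentiableAt ℝ g u ∧
      -(1 / ((n : ℝ) + 1)) < deriv g u := by
    intro n
    apply exists_deriv_gt hgLip (by linarith [hδnpos n] : m - δn n < m)
    · apply hgle
      rw [Metric.mem_ball, Real.dist_eq]
      rw [abs_of_nonpos (by linarith [hδnpos n])]
      simpa using hδnlt n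
    · positivity
  choose u hu hud hugt using hleft
  obtain ⟨hmemf, hdistf, hbdf, hdef⟩ := process u
    (fun n => by
      rw [abs_of_nonpos (by linarith [(hu n).2])]
      have := (hu n).1; linarith)
    hud
  obtain ⟨ξp, hξp0, hξpS⟩ := seed_nonneg f (Set.Ioo a b) m K u hmemf hdistf hbdf
    (fun n => by rw [hdef n]; linarith [hugt n])
  -- right sequence : derivative bounded above
  have hright : ∀ n : ℕ, ∃ v, v ∈ Set.Ioo m (m + δn n) ∧ DifferentiableAt ℝ g v ∧
      deriv g v < 1 / ((n : ℝ) + 1) := by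
    intro n
    apply exists_deriv_lt hgLip (by linarith [hδnpos n] : m < m + δn n)
    · apply hgle
      rw [Metric.mem_ball, Real.dist_eq]
      rw [abs_of_nonneg (by linarith [hδnpos n])]
      simpa using hδnlt n
    · positivity
  choose v hv hvd hvlt using hright
  obtain ⟨hmemf', hdistf', hbdf', hdef'⟩ := process v
    (fun n => by
      rw [abs_of_nonneg (by linarith [(hv n).1])]
      have := (hv n).2; linarith)
    hvd
  obtain ⟨ξm, hξm0, hξmS⟩ := seed_nonpos f (Set.Ioo a b) m K v hmemf' hdistf' hbdf'
    (fun n => by rw [hdef' n]; linarith [hvlt n])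
  -- 0 belongs to the Clarke subdifferential at m
  have h0mem : (0 : ℝ) ∈ clarkeSubdiffOn f (Set.Ioo a b) m := by
    have hseg : (0 : ℝ) ∈ segment ℝ ξm ξp := by
      rw [segment_eq_Icc (hξm0.trans hξp0)]
      exact ⟨hξm0, hξp0⟩
    rw [← convexHull_pair] at hseg
    exact convexHull_mono
      (Set.insert_subset_iff.mpr ⟨hξmS, Set.singleton_subset_iff.mpr hξpS⟩) hseg
  have := hinvex m hmab h0mem x1 hx1ab
  linarith
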